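/- Let A be a symmetric convex body in ℝ^m. Then for any 0 < ε < 1 one has |{x ∈ A : ‖x‖₂ ≥ ε R(A)}| ≥ (1/2)(1−ε)^m |A|, where R(A) = max{‖x‖₂ : x ∈ A} and |·| denotes m-dimensional Lebesgue measure. -/

import Mathlib

open MeasureTheory Real
open scoped ENNReal Pointwise RealInnerProductSpace

noncomputable section

/-- `ℝⁿ` with its Euclidean structure. -/
abbrev En (n : ℕ) : Type := EuclideanSpace ℝ (Fin n)

/-- The orthogonal group `O(n)`. -/
abbrev OG (n : ℕ) := Matrix.orthogonalGroup (Fin n) ℝ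

/-- The linear action of an `n × n` matrix on `ℝⁿ`. -/
def matLin (n : ℕ) (U : Matrix (Fin n) (Fin n) ℝ) : En n →ₗ[ℝ] En n where
  toFun x := WithLp.toLp 2 (U.mulVec x)
  map_add' x y := by simp [Matrix.mulVec_add]
  map_smul' c x := by simp [Matrix.mulVec_smul]

/-- The radius `R(A) = sup {‖x‖₂ : x ∈ A}` of a set. -/
def radius {E : Type*} [NormedAddCommGroup E] (A : Set E) : ℝ := sSup (norm '' A)

/-- `K` is symmetric, i.e. `K = -K`. -/
def IsSymmetricSet {E : Type*} [AddGroup E] (K : Set E) : Prop := ∀ x ∈ K, -x ∈ K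

/-- `K` is an isotropic convex body in `ℝⁿ` with isotropic constant `L`:
it is a convex body of volume `1`, its center of mass is at the origin, and
`∫_K ⟨x,θ⟩² dx = L²` for every unit vector `θ`. -/
def IsIsotropicBody (n : ℕ) (K : Set (En n)) (L : ℝ) : Prop :=
  IsCompact K ∧ Convex ℝ K ∧ (interior K).Nonempty ∧
  volume K = 1 ∧ 0 < L ∧
  (∀ θ : En n, ∫ x in K, ⟪x, θ⟫ = (0:ℝ)) ∧
  (∀ θ : En n, ‖θ‖ = 1 → ∫ x in K, ⟪x, θ⟫ ^ 2 = L ^ 2)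

/-- `Lₙ′`: the maximal isotropic constant over isotropic *symmetric* convex bodies in `ℝⁿ`. -/
def maxIsoConstSym (n : ℕ) : ℝ :=
  sSup {L : ℝ | ∃ K : Set (En n), IsIsotropicBody n K L ∧ IsSymmetricSet K}

/-- `Lₙ`: the maximal isotropic constant over isotropic convex bodies in `ℝⁿ`. -/
def maxIsoConst (n : ℕ) : ℝ :=
  sSup {L : ℝ | ∃ K : Set (En n), IsIsotropicBody n K L}

/-- A measure `μ` is log-concave if `μ(λA + (1-λ)B) ≥ μ(A)^λ μ(B)^{1-λ}` for all
compact `A, B` and `λ ∈ (0,1)`. -/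
def IsLogConcave (n : ℕ) (μ : Measure (En n)) : Prop :=
  ∀ A B : Set (En n), IsCompact A → IsCompact B → ∀ l : ℝ, 0 < l → l < 1 →
    μ A ^ l * μ B ^ (1 - l) ≤ μ (l • A + (1 - l) • B)

/-- A probability measure `μ` is isotropic: centered with identity covariance. -/
def IsIsotropicMeasure (n : ℕ) (μ : Measure (En n)) : Prop :=
  IsProbabilityMeasure μ ∧
  (∀ θ : En n, ∫ x, ⟪x, θ⟫ ∂μ = (0:ℝ)) ∧
  (∀ θ : En n, ‖θ‖ = 1 → ∫ x, ⟪x, θ⟫ ^ 2 ∂μ = 1)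

/-- The `L_q`-centroid body `Z_q(μ)` of a measure `μ`: the convex body with support
function `h(y) = (∫ |⟨x,y⟩|^q dμ(x))^{1/q}`. -/
def centroidBody (n : ℕ) (μ : Measure (En n)) (q : ℝ) : Set (En n) :=
  {x | ∀ y : En n, ⟪x, y⟫ ≤ (∫ z, |⟪z, y⟫| ^ q ∂μ) ^ (1 / q)}

/-- The `L_q`-centroid body `Z_q(K)` of an isotropic convex body `K`. -/
def centroidBodyK (n : ℕ) (K : Set (En n)) (q : ℝ) : Set (En n) :=
  {x | ∀ y : En n, ⟪x, y⟫ ≤ (∫ z in K, |⟪z, y⟫| ^ q) ^ (1 / q)}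

/-- The polar body `A° = {y : ⟨x,y⟩ ≤ 1 for all x ∈ A}`. -/
def polarBody (n : ℕ) (A : Set (En n)) : Set (En n) :=
  {y | ∀ x ∈ A, ⟪x, y⟫ ≤ 1}

/-- The `ψ₂`-norm `‖⟨·,θ⟩‖_{L_{ψ₂}(K)} = inf {t > 0 : ∫_K exp((|⟨x,θ⟩|/t)²) dx ≤ 2}`. -/
def psi2Norm (n : ℕ) (K : Set (En n)) (θ : En n) : ℝ :=
  sInf {t : ℝ | 0 < t ∧ ∫ x in K, Real.exp ((|⟪x, θ⟫| / t) ^ 2) ≤ 2}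

/-- The volume radius of a subset `B` of a subspace `E`, relative to the unit ball of `E`. -/
def vrad {n : ℕ} (E : Submodule ℝ (En n)) (B : Set ↥E) : ℝ :=
  ((volume B).toReal / (volume (Metric.closedBall (0 : ↥E) 1)).toReal) ^
    (1 / (Module.finrank ℝ E : ℝ))

/-- `w_t(A) = sup {vrad(A ∩ E) : E ∈ G_{n,t}}`. -/
def wt (n t : ℕ) (A : Set (En n)) : ℝ :=
  sSup {r | ∃ E : Submodule ℝ (En n), Module.finrank ℝ E = t ∧
    r = vrad E {x : ↥E | (x : En n) ∈ A}}

/-- `v_t(A) = sup {vrad(P_E(A)) : E ∈ G_{n,t}}`. -/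
def vt (n t : ℕ) (A : Set (En n)) : ℝ :=
  sSup {r | ∃ E : Submodule ℝ (En n), Module.finrank ℝ E = t ∧
    r = vrad E (⇑(E.orthogonalProjectionOnto) '' A)}

/-- The isotropic constant of a convex body `A ⊆ ℝᵐ`, via the minimization
characterization `m·L_A² = min over affine positions of (∫_B ‖x‖² dx) / |B|^{1+2/m}`. -/
def isoConstBody (m : ℕ) (A : Set (En m)) : ℝ :=
  Real.sqrt ((1 / (m : ℝ)) * sInf {r : ℝ |
    ∃ (T : En m ≃ₗ[ℝ] En m) (a : En m),
      r = (∫ x in (fun y => T y + a) '' A, ‖x‖ ^ 2) /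
          ((volume ((fun y => T y + a) '' A)).toReal ^ (1 + 2 / (m : ℝ)))})

/-- **Klartag's lemma.** Let `A` be a symmetric convex body in `ℝᵐ`.
Then for any `0 < ε < 1`,
`|{x ∈ A : ‖x‖₂ ≥ ε R(A)}| ≥ (1/2)(1-ε)^m |A|`. -/
theorem statement8 (m : ℕ) (A : Set (En m))
    (hcomp : IsCompact A) (hconv : Convex ℝ A) (hint : (interior A).Nonempty)
    (hsym : IsSymmetricSet A) (ε : ℝ) (hε0 : 0 < ε) (hε1 : ε < 1) :
    ENNReal.ofReal ((1 / 2) * (1 - ε) ^ m) * volume A ≤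
      volume {x ∈ A | ε * radius A ≤ ‖x‖} := by
  have hAne : A.Nonempty := hint.mono interior_subset
  obtain ⟨x₀, hx₀A, hx₀max⟩ := hcomp.exists_isMaxOn hAne continuous_norm.continuousOn
  have hx₀max' : ∀ a ∈ A, ‖a‖ ≤ ‖x₀‖ := fun a ha => hx₀max ha
  set R := ‖x₀‖ with hRdef
  have hRrad : radius A = R := by
    apply le_antisymm
    · exact csSup_le (hAne.image _) (by rintro r ⟨a, ha, rfl⟩; exact hx₀max' a ha)
    · exact le_csSup ⟨R, by rintro r ⟨a, ha, rfl⟩; exact hx₀max' a ha⟩ ⟨x₀, hx₀A, rfl⟩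
  set P : Set (En m) := {a ∈ A | 0 ≤ ⟪a, x₀⟫} with hPdef
  have hPA : P ⊆ A := fun a ha => ha.1
  -- volume A ≤ 2 * volume P
  have hcover : A ⊆ P ∪ (-P) := by
    intro a ha
    rcases le_or_gt 0 (⟪a, x₀⟫ : ℝ) with h | h
    · exact Or.inl ⟨ha, h⟩
    · refine Or.inr (Set.mem_neg.2 ⟨hsym a ha, ?_⟩)
      rw [inner_neg_left]; linarith
  have hvolP : volume A ≤ 2 * volume P := by
    calc volume A ≤ volume (P ∪ -P) := measure_mono hcover
      _ ≤ volume P + volume (-P) := measure_union_le _ _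
      _ = 2 * volume P := by rw [Measure.measure_neg, two_mul]
  set c : ℝ := 1 - ε with hcdef
  have hc0 : 0 ≤ c := by linarith
  set S : Set (En m) := (fun a => ε • x₀ + c • a) '' P with hSdef
  have hvolS : volume S = ENNReal.ofReal (c ^ m) * volume P := by
    have hS : S = (fun y => ε • x₀ + y) '' (c • P) := by
      rw [← Set.image_smul, ← Set.image_comp]; rfl
    rw [hS, Set.image_add_left, measure_preimage_add,
      Measure.addHaar_smul_of_nonneg volume hc0 P, finrank_euclideanSpace_fin]
  have hsub : S ⊆ {x ∈ A | ε * radius A ≤ ‖x‖} := by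
    rintro _ ⟨a, ⟨haA, hax⟩, rfl⟩
    refine ⟨hconv hx₀A haA hε0.le hc0 (by ring), ?_⟩
    rw [hRrad]
    rcases eq_or_lt_of_le (norm_nonneg x₀) with h0 | h0
    · have hR0 : R = 0 := hRdef.trans h0.symm
      rw [hR0, mul_zero]; exact norm_nonneg _
    · have hinner : ε * R ^ 2 ≤ ⟪ε • x₀ + c • a, x₀⟫ := by
        rw [inner_add_left, real_inner_smul_left, real_inner_smul_left,
          real_inner_self_eq_norm_sq]
        nlinarith
      have hCS : (⟪ε • x₀ + c • a, x₀⟫ : ℝ) ≤ ‖ε • x₀ + c • a‖ * R :=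
        real_inner_le_norm _ _
      nlinarith [hε0.le]
  have half2 : (ENNReal.ofReal (1 / 2)) * 2 = 1 := by
    rw [show (2 : ℝ≥0∞) = ENNReal.ofReal 2 by norm_num, ← ENNReal.ofReal_mul (by norm_num)]
    norm_num
  calc ENNReal.ofReal ((1 / 2) * (1 - ε) ^ m) * volume A
      = ENNReal.ofReal (1 / 2) * (ENNReal.ofReal (c ^ m) * volume A) := by
        rw [ENNReal.ofReal_mul (by norm_num), mul_assoc]
    _ ≤ ENNReal.ofReal (1 / 2) * (ENNReal.ofReal (c ^ m) * (2 * volume P)) := by gcongr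
    _ = (ENNReal.ofReal (1 / 2) * 2) * (ENNReal.ofReal (c ^ m) * volume P) := by ring
    _ = volume S := by rw [half2, one_mul, hvolS]
    _ ≤ volume {x ∈ A | ε * radius A ≤ ‖x‖} := measure_mono hsub
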